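/- For the linear extrapolation formula y' = 2(1-ε)^N f - (1-2ε)^N f, the residual bias satisfies |y' - f| ≤ ε²N²|f| for all ε ∈ [0, 1/2] and natural numbers N. (Equivalently, 0 ≤ 1 - (2(1-ε)^N - (1-2ε)^N) ≤ ε²N².) -/
import Mathlib


/-- Linear zero-noise extrapolation under the global depolarising model:
the residual bias of `y' = 2(1-ε)^N f - (1-2ε)^N f` satisfies
`|y' - f| ≤ ε² N² |f|` for all `ε ∈ [0, 1/2]` and natural `N`. -/
theorem stmt_0 (ε : ℝ) (hε0 : 0 ≤ ε) (hε : ε ≤ 1 / 2) (N : ℕ) (f : ℝ) :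
    |(2 * (1 - ε) ^ N * f - (1 - 2 * ε) ^ N * f) - f| ≤ ε ^ 2 * (N : ℝ) ^ 2 * |f| := by
  set a : ℝ := 1 - ε with ha
  set b : ℝ := 1 - 2 * ε with hb
  have hb0 : 0 ≤ b := by rw [hb]; linarith
  have hba : b ≤ a := by rw [ha, hb]; linarith
  have ha0 : 0 ≤ a := le_trans hb0 hba
  have ha1 : a ≤ 1 := by rw [ha]; linarith
  have key : ∀ k : ℕ, 0 ≤ a ^ k - b ^ k ∧ a ^ k - b ^ k ≤ ε * k := by
    intro k
    induction k with
    | zero => norm_num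
    | succ n ih =>
      obtain ⟨h1, h2⟩ := ih
      have hbn : b ^ n ≤ 1 := pow_le_one₀ hb0 (le_trans hba ha1)
      have hbn0 : 0 ≤ b ^ n := pow_nonneg hb0 n
      constructor
      · have := pow_le_pow_left₀ hb0 hba (n + 1)
        linarith
      · have h3 : a ^ (n + 1) - b ^ (n + 1) = a * (a ^ n - b ^ n) + (a - b) * b ^ n := by
          ring
        have h4 : a * (a ^ n - b ^ n) ≤ 1 * (a ^ n - b ^ n) :=
          mul_le_mul_of_nonneg_right ha1 h1
        have h5 : (a - b) * b ^ n ≤ (a - b) * 1 :=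
          mul_le_mul_of_nonneg_left hbn (by linarith)
        have hab : a - b = ε := by rw [ha, hb]; ring
        push_cast
        rw [h3]
        nlinarith
  have main : ∀ n : ℕ, 0 ≤ 1 - 2 * a ^ n + b ^ n ∧
      1 - 2 * a ^ n + b ^ n ≤ ε ^ 2 * n * (n - 1) := by
    intro n
    induction n with
    | zero => norm_num
    | succ n ih =>
      obtain ⟨h1, h2⟩ := ih
      obtain ⟨k1, k2⟩ := key n
      have step : 1 - 2 * a ^ (n + 1) + b ^ (n + 1)
          = (1 - 2 * a ^ n + b ^ n) + 2 * ε * (a ^ n - b ^ n) := by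
        rw [ha, hb]; ring
      constructor
      · rw [step]; nlinarith
      · rw [step]
        push_cast
        nlinarith
  obtain ⟨m1, m2⟩ := main N
  have hrw : (2 * a ^ N * f - b ^ N * f) - f = (2 * a ^ N - b ^ N - 1) * f := by ring
  rw [hrw, abs_mul]
  have habs : |2 * a ^ N - b ^ N - 1| = 1 - 2 * a ^ N + b ^ N := by
    rw [abs_of_nonpos (by linarith)]; ring
  rw [habs]
  have hN : (0:ℝ) ≤ N := Nat.cast_nonneg N
  have : 1 - 2 * a ^ N + b ^ N ≤ ε ^ 2 * (N : ℝ) ^ 2 := by nlinarith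
  exact mul_le_mul_of_nonneg_right this (abs_nonneg f)
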